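/- For all indices 1 ≤ i, j ≤ ℓ, the difference operators H_i(u) and E_j(v) satisfy the Yangian Cartan–raising relation: (u − v)·(H_i(u)∘E_j(v) − E_j(v)∘H_i(u)) = −(iħ/2)·d_i·a_{ij}·(H_i(u)∘(E_j(u) − E_j(v)) + (E_j(u) − E_j(v))∘H_i(u)), as an identity of ℂ(u,v)-linear endomorphisms of F. -/

import Mathlib

/- STATEMENT 0: the Yangian Cartan–raising relation
   (u − v)·(H_i(u)∘E_j(v) − E_j(v)∘H_i(u))
     = −(iħ/2)·d_i·a_{ij}·(H_i(u)∘(E_j(u) − E_j(v)) + (E_j(u) − E_j(v))∘H_i(u))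
   for the difference operators of Gerasimov–Kharchev–Lebedev–Oblezin. -/

open MvPolynomial Complex Finset

noncomputable section

/-- Variables: two spectral variables `u, v` (indexed by `Fin 2`) and the `γ_{i,k}`. -/
abbrev Var (ℓ : ℕ) (m : Fin ℓ → ℕ) := Fin 2 ⊕ ((i : Fin ℓ) × Fin (m i))

/-- The field of rational functions over `ℂ` in the variables `u, v, γ_{i,k}`. -/
abbrev FF (ℓ : ℕ) (m : Fin ℓ → ℕ) := FractionRing (MvPolynomial (Var ℓ m) ℂ)

variable (ℓ : ℕ) (m : Fin ℓ → ℕ)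

/-- The embedding of constants `ℂ → F`. -/
def cstHom : ℂ →+* FF ℓ m :=
  (algebraMap (MvPolynomial (Var ℓ m) ℂ) (FF ℓ m)).comp (C : ℂ →+* MvPolynomial (Var ℓ m) ℂ)

def cst (c : ℂ) : FF ℓ m := cstHom ℓ m c

/-- The variable `γ_{i,k}` as an element of `F`. -/
def gam (i : Fin ℓ) (k : Fin (m i)) : FF ℓ m :=
  algebraMap (MvPolynomial (Var ℓ m) ℂ) (FF ℓ m) (X (Sum.inr ⟨i, k⟩))

/-- The spectral variables: `spec 0 = u`, `spec 1 = v`. -/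
def spec (t : Fin 2) : FF ℓ m :=
  algebraMap (MvPolynomial (Var ℓ m) ℂ) (FF ℓ m) (X (Sum.inl t))

/-- The algebra automorphism of the polynomial ring shifting the variable `w` by `c`
and fixing all other variables. -/
def shiftPoly (c : ℂ) (w : Var ℓ m) :
    MvPolynomial (Var ℓ m) ℂ ≃ₐ[ℂ] MvPolynomial (Var ℓ m) ℂ :=
  AlgEquiv.ofAlgHom
    (aeval (fun j => if j = w then X j + MvPolynomial.C c else X j))
    (aeval (fun j => if j = w then X j - MvPolynomial.C c else X j))
    (by apply MvPolynomial.algHom_ext; intro j; by_cases h : j = w <;> simp [h])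
    (by apply MvPolynomial.algHom_ext; intro j; by_cases h : j = w <;> simp [h])

/-- The induced automorphism of the field of rational functions. -/
def shiftField (c : ℂ) (w : Var ℓ m) : FF ℓ m ≃+* FF ℓ m :=
  IsFractionRing.ringEquivOfRingEquiv (shiftPoly ℓ m c w).toRingEquiv

variable (a : Fin ℓ → Fin ℓ → ℤ) (d : Fin ℓ → ℕ) (hb : ℂ)

/-- `β_{i,k}` : the automorphism `γ_{i,k} ↦ γ_{i,k} + iħ·d_i`. -/
def beta (i : Fin ℓ) (k : Fin (m i)) : FF ℓ m ≃+* FF ℓ m :=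
  shiftField ℓ m (I * hb * (d i : ℂ)) (Sum.inr ⟨i, k⟩)

/-- The constant `(iħ/2)·(d_i·a_{ij} + 2r·d_j)`, where `r` is offset by one
(so that `r` ranges over `0, …, −a_{ji} − 1` in `Finset.range`). -/
def cf (i j : Fin ℓ) (r : ℕ) : ℂ :=
  (I * hb / 2) * ((d i : ℂ) * (a i j : ℂ) + 2 * ((r : ℂ) + 1) * (d j : ℂ))

/-- The value `R_i(w)` of the rational function `R_i ∈ ℂ(x)` at `w ∈ F`. -/
def Rval (R : Fin ℓ → RatFunc ℂ) (i : Fin ℓ) (w : FF ℓ m) : FF ℓ m :=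
  Polynomial.eval₂ (cstHom ℓ m) w (R i).num / Polynomial.eval₂ (cstHom ℓ m) w (R i).denom

/-- The operator `H_i(w)`: multiplication by the rational function
`R_i(w)·Π_{j≠i}Π_{r=1}^{−a_{ji}}Π_{p=1}^{m_j}(w − γ_{j,p} − (iħ/2)(d_i a_{ij} + 2 r d_j))
  / Π_{p=1}^{m_i}(w − γ_{i,p})(w − γ_{i,p} − iħ d_i)`. -/
def Hop (R : Fin ℓ → RatFunc ℂ) (i : Fin ℓ) (w : FF ℓ m) : FF ℓ m → FF ℓ m := fun f =>
  (Rval ℓ m R i w *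
    (∏ j ∈ univ.erase i, ∏ r ∈ range (-(a j i)).toNat, ∏ p : Fin (m j),
      (w - gam ℓ m j p - cst ℓ m (cf ℓ a d hb i j r))) /
    (∏ p : Fin (m i),
      ((w - gam ℓ m i p) * (w - gam ℓ m i p - cst ℓ m (I * hb * (d i : ℂ)))))) * f

/-- The operator `E_i(w)`. -/
def Eop (i : Fin ℓ) (w : FF ℓ m) : FF ℓ m → FF ℓ m := fun f =>
  cst ℓ m ((d i : ℂ) ^ (-(1/2 : ℂ))) *
    ∑ k : Fin (m i),
      ((∏ j ∈ univ.filter (fun j => i < j), ∏ r ∈ range (-(a j i)).toNat, ∏ p : Fin (m j),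
          (gam ℓ m i k - gam ℓ m j p - cst ℓ m (cf ℓ a d hb i j r))) /
        ((w - gam ℓ m i k) * ∏ p ∈ univ.erase k, (gam ℓ m i k - gam ℓ m i p))) *
      (beta ℓ m d hb i k).symm f
set_option synthInstance.maxHeartbeats 1000000
set_option maxHeartbeats 2000000
section Aux
variable (ℓ : ℕ) (m : Fin ℓ → ℕ)

lemma algMap_injective :
    Function.Injective (algebraMap (MvPolynomial (Var ℓ m) ℂ) (FF ℓ m)) :=
  IsFractionRing.injective _ _

lemma var_sub_ne (w1 w2 : Var ℓ m) (hw : w1 ≠ w2) (c : ℂ) :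
    algebraMap (MvPolynomial (Var ℓ m) ℂ) (FF ℓ m) (X w1)
      - algebraMap (MvPolynomial (Var ℓ m) ℂ) (FF ℓ m) (X w2) - cst ℓ m c ≠ 0 := by
  have hc : cst ℓ m c = algebraMap (MvPolynomial (Var ℓ m) ℂ) (FF ℓ m) (C c) := rfl
  rw [hc, ← map_sub, ← map_sub]
  intro h
  have h2 : (X w1 - X w2 - C c : MvPolynomial (Var ℓ m) ℂ) = 0 := by
    apply algMap_injective ℓ m
    simpa using h
  have h3 := congrArg (eval (fun w => if w = w1 then c + 1 else 0)) h2
  simp [Ne.symm hw] at h3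

variable (a : Fin ℓ → Fin ℓ → ℤ) (d : Fin ℓ → ℕ) (hb : ℂ)

lemma spec_sub_gam_ne (t : Fin 2) (j : Fin ℓ) (p : Fin (m j)) (c : ℂ) :
    spec ℓ m t - gam ℓ m j p - cst ℓ m c ≠ 0 :=
  var_sub_ne ℓ m _ _ (by simp) c

lemma spec_sub_gam_ne' (t : Fin 2) (j : Fin ℓ) (p : Fin (m j)) :
    spec ℓ m t - gam ℓ m j p ≠ 0 := by
  have := spec_sub_gam_ne ℓ m t j p 0
  simpa [cst, map_zero] using this

lemma spec_sub_gam_add_ne (t : Fin 2) (j : Fin ℓ) (p : Fin (m j)) (c : ℂ) :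
    spec ℓ m t - gam ℓ m j p + cst ℓ m c ≠ 0 := by
  have := spec_sub_gam_ne ℓ m t j p (-c)
  have hc : cst ℓ m (-c) = - cst ℓ m c := by simp [cst, map_neg]
  rw [hc] at this
  simpa [sub_neg_eq_add] using this

lemma gam_sub_gam_ne (j : Fin ℓ) (k p : Fin (m j)) (h : k ≠ p) :
    gam ℓ m j k - gam ℓ m j p ≠ 0 := by
  have hne : (Sum.inr ⟨j, k⟩ : Var ℓ m) ≠ Sum.inr ⟨j, p⟩ := by
    intro hh
    apply h
    have := Sum.inr.inj hh
    exact eq_of_heq (Sigma.mk.inj_iff.mp this).2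
  have := var_sub_ne ℓ m _ _ hne 0
  rw [gam, gam]
  simpa [cst, map_zero] using this

end Aux
section Aux2
variable (ℓ : ℕ) (m : Fin ℓ → ℕ) (a : Fin ℓ → Fin ℓ → ℤ) (d : Fin ℓ → ℕ) (hb : ℂ)

lemma shiftField_algebraMap (c : ℂ) (w : Var ℓ m) (p : MvPolynomial (Var ℓ m) ℂ) :
    shiftField ℓ m c w (algebraMap (MvPolynomial (Var ℓ m) ℂ) (FF ℓ m) p)
      = algebraMap (MvPolynomial (Var ℓ m) ℂ) (FF ℓ m) (shiftPoly ℓ m c w p) :=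
  IsFractionRing.ringEquivOfRingEquiv_algebraMap _ _

lemma beta_symm_algebraMap (j : Fin ℓ) (k : Fin (m j)) (p : MvPolynomial (Var ℓ m) ℂ) :
    (beta ℓ m d hb j k).symm (algebraMap (MvPolynomial (Var ℓ m) ℂ) (FF ℓ m) p)
      = algebraMap (MvPolynomial (Var ℓ m) ℂ) (FF ℓ m)
          ((shiftPoly ℓ m (I * hb * (d j : ℂ)) (Sum.inr ⟨j, k⟩)).symm p) := by
  apply (beta ℓ m d hb j k).injective
  rw [RingEquiv.apply_symm_apply, beta, shiftField_algebraMap]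
  congr 1
  exact (AlgEquiv.apply_symm_apply _ _).symm

lemma shiftPoly_symm_X (c : ℂ) (w w' : Var ℓ m) :
    (shiftPoly ℓ m c w).symm (X w') = if w' = w then X w' - C c else X w' := by
  rw [shiftPoly, AlgEquiv.ofAlgHom_symm]
  by_cases h : w' = w <;> simp [h]

lemma beta_symm_gam_ne (j : Fin ℓ) (k : Fin (m j)) (j' : Fin ℓ) (p : Fin (m j'))
    (h : (⟨j', p⟩ : (i : Fin ℓ) × Fin (m i)) ≠ ⟨j, k⟩) :
    (beta ℓ m d hb j k).symm (gam ℓ m j' p) = gam ℓ m j' p := by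
  rw [gam, beta_symm_algebraMap, shiftPoly_symm_X]
  simp [h]

lemma beta_symm_gam_eq (j : Fin ℓ) (k : Fin (m j)) :
    (beta ℓ m d hb j k).symm (gam ℓ m j k)
      = gam ℓ m j k - cst ℓ m (I * hb * (d j : ℂ)) := by
  rw [gam, beta_symm_algebraMap, shiftPoly_symm_X, if_pos rfl, map_sub]
  rfl

lemma beta_symm_spec (j : Fin ℓ) (k : Fin (m j)) (t : Fin 2) :
    (beta ℓ m d hb j k).symm (spec ℓ m t) = spec ℓ m t := by
  rw [spec, beta_symm_algebraMap, shiftPoly_symm_X]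
  simp

lemma beta_symm_cst (j : Fin ℓ) (k : Fin (m j)) (c : ℂ) :
    (beta ℓ m d hb j k).symm (cst ℓ m c) = cst ℓ m c := by
  have hc : cst ℓ m c = algebraMap (MvPolynomial (Var ℓ m) ℂ) (FF ℓ m) (C c) := rfl
  rw [hc, beta_symm_algebraMap]
  congr 1
  have : (C c : MvPolynomial (Var ℓ m) ℂ) = algebraMap ℂ _ c := rfl
  rw [this, AlgEquiv.commutes]

lemma beta_symm_Rval (j : Fin ℓ) (k : Fin (m j)) (R : Fin ℓ → RatFunc ℂ) (i : Fin ℓ) :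
    (beta ℓ m d hb j k).symm (Rval ℓ m R i (spec ℓ m 0)) = Rval ℓ m R i (spec ℓ m 0) := by
  have hev : ∀ q : Polynomial ℂ,
      (beta ℓ m d hb j k).symm (Polynomial.eval₂ (cstHom ℓ m) (spec ℓ m 0) q)
        = Polynomial.eval₂ (cstHom ℓ m) (spec ℓ m 0) q := by
    intro q
    rw [show ((beta ℓ m d hb j k).symm (Polynomial.eval₂ (cstHom ℓ m) (spec ℓ m 0) q))
        = ((beta ℓ m d hb j k).symm : FF ℓ m →+* FF ℓ m)
            (Polynomial.eval₂ (cstHom ℓ m) (spec ℓ m 0) q) from rfl,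
      Polynomial.hom_eval₂]
    congr 1
    · refine RingHom.ext fun c => ?_
      simp only [RingHom.comp_apply, RingEquiv.coe_toRingHom]
      exact beta_symm_cst ℓ m d hb j k c
    · exact beta_symm_spec ℓ m d hb j k 0
  rw [Rval, map_div₀, hev, hev]

end Aux2
section Aux3
variable (ℓ : ℕ) (m : Fin ℓ → ℕ) (a : Fin ℓ → Fin ℓ → ℤ) (d : Fin ℓ → ℕ) (hb : ℂ)

/-- The multiplier of `H_i(u)`. -/
def Hmul (R : Fin ℓ → RatFunc ℂ) (i : Fin ℓ) : FF ℓ m :=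
  Rval ℓ m R i (spec ℓ m 0) *
    (∏ j ∈ univ.erase i, ∏ r ∈ range (-(a j i)).toNat, ∏ p : Fin (m j),
      (spec ℓ m 0 - gam ℓ m j p - cst ℓ m (cf ℓ a d hb i j r))) /
    (∏ p : Fin (m i),
      ((spec ℓ m 0 - gam ℓ m i p) * (spec ℓ m 0 - gam ℓ m i p - cst ℓ m (I * hb * (d i : ℂ)))))

lemma Hop_apply (R : Fin ℓ → RatFunc ℂ) (i : Fin ℓ) (f : FF ℓ m) :
    Hop ℓ m a d hb R i (spec ℓ m 0) f = Hmul ℓ m a d hb R i * f := rfl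

/-- The `k`-th coefficient of `E_j(w)`. -/
def Ecoef (j : Fin ℓ) (k : Fin (m j)) (w : FF ℓ m) : FF ℓ m :=
  (∏ j' ∈ univ.filter (fun j' => j < j'), ∏ r ∈ range (-(a j' j)).toNat, ∏ p : Fin (m j'),
      (gam ℓ m j k - gam ℓ m j' p - cst ℓ m (cf ℓ a d hb j j' r))) /
    ((w - gam ℓ m j k) * ∏ p ∈ univ.erase k, (gam ℓ m j k - gam ℓ m j p))

lemma Eop_apply (j : Fin ℓ) (w : FF ℓ m) (f : FF ℓ m) :
    Eop ℓ m a d hb j w f = cst ℓ m ((d j : ℂ) ^ (-(1/2 : ℂ))) *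
      ∑ k : Fin (m j), Ecoef ℓ m a d hb j k w * (beta ℓ m d hb j k).symm f := rfl

/-- Telescoping identity. -/
lemma telescope {x t c0 : FF ℓ m} (n : ℕ) (h : (n : FF ℓ m) * t = -(2 * c0)) :
    (x + c0) * ∏ r ∈ range n, (x + t - (c0 + ((r : FF ℓ m) + 1) * t))
      = (x - c0) * ∏ r ∈ range n, (x - (c0 + ((r : FF ℓ m) + 1) * t)) := by
  have e1 : ∀ r ∈ range n, x + t - (c0 + ((r : FF ℓ m) + 1) * t)
      = x - c0 - (r : FF ℓ m) * t := fun r _ => by ring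
  have e2 : ∀ r ∈ range n, x - (c0 + ((r : FF ℓ m) + 1) * t)
      = x - c0 - ((r + 1 : ℕ) : FF ℓ m) * t := fun r _ => by push_cast; ring
  rw [Finset.prod_congr rfl e1, Finset.prod_congr rfl e2]
  have hx : x + c0 = x - c0 - (n : FF ℓ m) * t := by rw [h]; ring
  rw [hx]
  have h1 := Finset.prod_range_succ (fun r : ℕ => x - c0 - (r : FF ℓ m) * t) n
  have h2 := Finset.prod_range_succ' (fun r : ℕ => x - c0 - (r : FF ℓ m) * t) n
  simp only [Nat.cast_zero, zero_mul, sub_zero] at h2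
  rw [mul_comm]
  rw [← h1, h2]
  ring

end Aux3
section Aux4
variable (ℓ : ℕ) (m : Fin ℓ → ℕ) (a : Fin ℓ → Fin ℓ → ℤ) (d : Fin ℓ → ℕ) (hb : ℂ)

lemma cst_cf_eq (i j : Fin ℓ) (r : ℕ) :
    cst ℓ m (cf ℓ a d hb i j r)
      = cst ℓ m ((I * hb / 2) * ((d i : ℂ) * (a i j : ℂ))) + ((r : FF ℓ m) + 1) * cst ℓ m (I * hb * (d j : ℂ)) := by
  have h : cf ℓ a d hb i j r
      = (I * hb / 2) * ((d i : ℂ) * (a i j : ℂ)) + ((r : ℂ) + 1) * (I * hb * (d j : ℂ)) := by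
    simp only [cf]; ring
  simp only [cst, h, map_add, map_mul, map_natCast, map_one]

lemma key (ha : ∀ i, a i i = 2) (ha' : ∀ i j, i ≠ j → a i j ≤ 0)
    (hsym : ∀ i j, (d i : ℤ) * a i j = (d j : ℤ) * a j i)
    (R : Fin ℓ → RatFunc ℂ) (i j : Fin ℓ) (k : Fin (m j)) :
    (spec ℓ m 0 - gam ℓ m j k - cst ℓ m ((I * hb / 2) * ((d i : ℂ) * (a i j : ℂ)))) * Hmul ℓ m a d hb R i
      = (spec ℓ m 0 - gam ℓ m j k + cst ℓ m ((I * hb / 2) * ((d i : ℂ) * (a i j : ℂ)))) * (beta ℓ m d hb j k).symm (Hmul ℓ m a d hb R i) := by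
  have h1 : (beta ℓ m d hb j k).symm (Hmul ℓ m a d hb R i)
      = Rval ℓ m R i (spec ℓ m 0) * (beta ℓ m d hb j k).symm (∏ j' ∈ univ.erase i, ∏ r ∈ range (-(a j' i)).toNat, ∏ p : Fin (m j'), (spec ℓ m 0 - gam ℓ m j' p - cst ℓ m (cf ℓ a d hb i j' r))) / (beta ℓ m d hb j k).symm (∏ p : Fin (m i), ((spec ℓ m 0 - gam ℓ m i p) * (spec ℓ m 0 - gam ℓ m i p - cst ℓ m (I * hb * (d i : ℂ))))) := by
    rw [Hmul, map_div₀, map_mul, beta_symm_Rval]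
  rw [h1, Hmul]
  by_cases hij : i = j
  · -- diagonal case
    subst hij
    have hφN : (beta ℓ m d hb i k).symm (∏ j' ∈ univ.erase i, ∏ r ∈ range (-(a j' i)).toNat, ∏ p : Fin (m j'), (spec ℓ m 0 - gam ℓ m j' p - cst ℓ m (cf ℓ a d hb i j' r))) = (∏ j' ∈ univ.erase i, ∏ r ∈ range (-(a j' i)).toNat, ∏ p : Fin (m j'), (spec ℓ m 0 - gam ℓ m j' p - cst ℓ m (cf ℓ a d hb i j' r))) := by
      rw [map_prod]
      refine Finset.prod_congr rfl fun j' hj' => ?_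
      rw [map_prod]
      refine Finset.prod_congr rfl fun r _ => ?_
      rw [map_prod]
      refine Finset.prod_congr rfl fun p _ => ?_
      rw [map_sub, map_sub, beta_symm_spec, beta_symm_cst, beta_symm_gam_ne]
      exact fun hh => (Finset.mem_erase.mp hj').1 (congrArg Sigma.fst hh)
    have hc0 : cst ℓ m ((I * hb / 2) * ((d i : ℂ) * (a i i : ℂ))) = cst ℓ m (I * hb * (d i : ℂ)) := by
      rw [ha i]; congr 1; push_cast; ring
    have hφD : (beta ℓ m d hb i k).symm (∏ p : Fin (m i), ((spec ℓ m 0 - gam ℓ m i p) * (spec ℓ m 0 - gam ℓ m i p - cst ℓ m (I * hb * (d i : ℂ)))))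
        = ((spec ℓ m 0 - gam ℓ m i k + cst ℓ m (I * hb * (d i : ℂ))) * (spec ℓ m 0 - gam ℓ m i k)) * (∏ p ∈ univ.erase k, ((spec ℓ m 0 - gam ℓ m i p) * (spec ℓ m 0 - gam ℓ m i p - cst ℓ m (I * hb * (d i : ℂ))))) := by
      rw [map_prod, ← Finset.mul_prod_erase univ _ (mem_univ k)]
      refine congrArg₂ (· * ·) ?_ ?_
      · rw [map_mul, map_sub, map_sub, map_sub, beta_symm_spec, beta_symm_cst,
          beta_symm_gam_eq]
        ring
      · refine Finset.prod_congr rfl fun p hp => ?_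
        rw [map_mul, map_sub, map_sub, map_sub, beta_symm_spec, beta_symm_cst,
          beta_symm_gam_ne]
        intro hh
        exact (Finset.mem_erase.mp hp).1 (eq_of_heq (Sigma.mk.inj_iff.mp hh).2)
    have hD : (∏ p : Fin (m i), ((spec ℓ m 0 - gam ℓ m i p) * (spec ℓ m 0 - gam ℓ m i p - cst ℓ m (I * hb * (d i : ℂ))))) = ((spec ℓ m 0 - gam ℓ m i k) * (spec ℓ m 0 - gam ℓ m i k - cst ℓ m (I * hb * (d i : ℂ)))) * (∏ p ∈ univ.erase k, ((spec ℓ m 0 - gam ℓ m i p) * (spec ℓ m 0 - gam ℓ m i p - cst ℓ m (I * hb * (d i : ℂ))))) :=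
      (Finset.mul_prod_erase univ _ (mem_univ k)).symm
    rw [hφN, hφD, hc0, hD]
    have hx0 : spec ℓ m 0 - gam ℓ m i k ≠ 0 := spec_sub_gam_ne' ℓ m 0 i k
    have hxm : spec ℓ m 0 - gam ℓ m i k - cst ℓ m (I * hb * (d i : ℂ)) ≠ 0 := spec_sub_gam_ne ℓ m 0 i k _
    have hxp : spec ℓ m 0 - gam ℓ m i k + cst ℓ m (I * hb * (d i : ℂ)) ≠ 0 := spec_sub_gam_add_ne ℓ m 0 i k _
    have hDr : (∏ p ∈ univ.erase k, ((spec ℓ m 0 - gam ℓ m i p) * (spec ℓ m 0 - gam ℓ m i p - cst ℓ m (I * hb * (d i : ℂ))))) ≠ 0 := by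
      refine Finset.prod_ne_zero_iff.mpr fun p _ => ?_
      exact mul_ne_zero (spec_sub_gam_ne' ℓ m 0 i p) (spec_sub_gam_ne ℓ m 0 i p _)
    rw [← mul_div_assoc, ← mul_div_assoc,
      div_eq_div_iff (mul_ne_zero (mul_ne_zero hx0 hxm) hDr)
        (mul_ne_zero (mul_ne_zero hxp hx0) hDr)]
    ring
  · -- off-diagonal case
    have hji : j ≠ i := fun h => hij h.symm
    have hjmem : j ∈ univ.erase i := Finset.mem_erase.mpr ⟨hji, mem_univ j⟩
    have hφD : (beta ℓ m d hb j k).symm (∏ p : Fin (m i), ((spec ℓ m 0 - gam ℓ m i p) * (spec ℓ m 0 - gam ℓ m i p - cst ℓ m (I * hb * (d i : ℂ))))) = (∏ p : Fin (m i), ((spec ℓ m 0 - gam ℓ m i p) * (spec ℓ m 0 - gam ℓ m i p - cst ℓ m (I * hb * (d i : ℂ))))) := by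
      rw [map_prod]
      refine Finset.prod_congr rfl fun p _ => ?_
      rw [map_mul, map_sub, map_sub, map_sub, beta_symm_spec, beta_symm_cst,
        beta_symm_gam_ne]
      exact fun hh => hij (congrArg Sigma.fst hh)
    have hNeq : (∏ j' ∈ univ.erase i, ∏ r ∈ range (-(a j' i)).toNat, ∏ p : Fin (m j'), (spec ℓ m 0 - gam ℓ m j' p - cst ℓ m (cf ℓ a d hb i j' r))) = (∏ r ∈ range (-(a j i)).toNat, (spec ℓ m 0 - gam ℓ m j k - cst ℓ m (cf ℓ a d hb i j r))) * (∏ r ∈ range (-(a j i)).toNat, ∏ p ∈ univ.erase k, (spec ℓ m 0 - gam ℓ m j p - cst ℓ m (cf ℓ a d hb i j r))) * (∏ j' ∈ (univ.erase i).erase j, ∏ r ∈ range (-(a j' i)).toNat, ∏ p : Fin (m j'), (spec ℓ m 0 - gam ℓ m j' p - cst ℓ m (cf ℓ a d hb i j' r))) := by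
      rw [← Finset.mul_prod_erase (univ.erase i) _ hjmem]
      congr 1
      rw [← Finset.prod_mul_distrib]
      exact Finset.prod_congr rfl fun r _ => (Finset.mul_prod_erase univ _ (mem_univ k)).symm
    have hφP : (beta ℓ m d hb j k).symm (∏ r ∈ range (-(a j i)).toNat, (spec ℓ m 0 - gam ℓ m j k - cst ℓ m (cf ℓ a d hb i j r))) = (∏ r ∈ range (-(a j i)).toNat, (spec ℓ m 0 - gam ℓ m j k + cst ℓ m (I * hb * (d j : ℂ)) - cst ℓ m (cf ℓ a d hb i j r))) := by
      rw [map_prod]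
      refine Finset.prod_congr rfl fun r _ => ?_
      rw [map_sub, map_sub, beta_symm_spec, beta_symm_cst, beta_symm_gam_eq]
      ring
    have hφQ : (beta ℓ m d hb j k).symm (∏ r ∈ range (-(a j i)).toNat, ∏ p ∈ univ.erase k, (spec ℓ m 0 - gam ℓ m j p - cst ℓ m (cf ℓ a d hb i j r))) = (∏ r ∈ range (-(a j i)).toNat, ∏ p ∈ univ.erase k, (spec ℓ m 0 - gam ℓ m j p - cst ℓ m (cf ℓ a d hb i j r))) := by
      rw [map_prod]
      refine Finset.prod_congr rfl fun r _ => ?_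
      rw [map_prod]
      refine Finset.prod_congr rfl fun p hp => ?_
      rw [map_sub, map_sub, beta_symm_spec, beta_symm_cst, beta_symm_gam_ne]
      intro hh
      exact (Finset.mem_erase.mp hp).1 (eq_of_heq (Sigma.mk.inj_iff.mp hh).2)
    have hφNR : (beta ℓ m d hb j k).symm (∏ j' ∈ (univ.erase i).erase j, ∏ r ∈ range (-(a j' i)).toNat, ∏ p : Fin (m j'), (spec ℓ m 0 - gam ℓ m j' p - cst ℓ m (cf ℓ a d hb i j' r))) = (∏ j' ∈ (univ.erase i).erase j, ∏ r ∈ range (-(a j' i)).toNat, ∏ p : Fin (m j'), (spec ℓ m 0 - gam ℓ m j' p - cst ℓ m (cf ℓ a d hb i j' r))) := by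
      rw [map_prod]
      refine Finset.prod_congr rfl fun j' hj' => ?_
      rw [map_prod]
      refine Finset.prod_congr rfl fun r _ => ?_
      rw [map_prod]
      refine Finset.prod_congr rfl fun p _ => ?_
      rw [map_sub, map_sub, beta_symm_spec, beta_symm_cst, beta_symm_gam_ne]
      exact fun hh => (Finset.mem_erase.mp hj').1 (congrArg Sigma.fst hh)
    have hφNeq : (beta ℓ m d hb j k).symm (∏ j' ∈ univ.erase i, ∏ r ∈ range (-(a j' i)).toNat, ∏ p : Fin (m j'), (spec ℓ m 0 - gam ℓ m j' p - cst ℓ m (cf ℓ a d hb i j' r))) = (∏ r ∈ range (-(a j i)).toNat, (spec ℓ m 0 - gam ℓ m j k + cst ℓ m (I * hb * (d j : ℂ)) - cst ℓ m (cf ℓ a d hb i j r))) * (∏ r ∈ range (-(a j i)).toNat, ∏ p ∈ univ.erase k, (spec ℓ m 0 - gam ℓ m j p - cst ℓ m (cf ℓ a d hb i j r))) * (∏ j' ∈ (univ.erase i).erase j, ∏ r ∈ range (-(a j' i)).toNat, ∏ p : Fin (m j'), (spec ℓ m 0 - gam ℓ m j' p - cst ℓ m (cf ℓ a d hb i j'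 r))) := by
      rw [hNeq, map_mul, map_mul, hφP, hφQ, hφNR]
    have hzn : (0 : ℤ) ≤ -(a j i) := neg_nonneg.mpr (ha' j i hji)
    have hsymC : (d i : ℂ) * (a i j : ℂ) = (d j : ℂ) * (a j i : ℂ) := by
      exact_mod_cast congrArg (Int.cast : ℤ → ℂ) (hsym i j)
    have hnC : (((-(a j i)).toNat : ℕ) : ℂ) = -(a j i : ℂ) := by
      exact_mod_cast congrArg (Int.cast : ℤ → ℂ) (Int.toNat_of_nonneg hzn)
    have h2 : (((-(a j i)).toNat : ℕ) : ℂ) * (I * hb * (d j : ℂ))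
        = -(2 * ((I * hb / 2) * ((d i : ℂ) * (a i j : ℂ)))) := by
      rw [hnC]; linear_combination (I * hb) * hsymC
    have hnt : (((-(a j i)).toNat : ℕ) : FF ℓ m) * cst ℓ m (I * hb * (d j : ℂ)) = -(2 * cst ℓ m ((I * hb / 2) * ((d i : ℂ) * (a i j : ℂ)))) := by
      simp only [cst]
      rw [← map_natCast (cstHom ℓ m) (-(a j i)).toNat, ← map_mul, h2, map_neg, map_mul,
        map_ofNat]
    have htel := telescope ℓ m (x := spec ℓ m 0 - gam ℓ m j k) (t := cst ℓ m (I * hb * (d j : ℂ)))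
      (c0 := cst ℓ m ((I * hb / 2) * ((d i : ℂ) * (a i j : ℂ)))) (-(a j i)).toNat hnt
    have hPeq : (∏ r ∈ range (-(a j i)).toNat,
        (spec ℓ m 0 - gam ℓ m j k - (cst ℓ m ((I * hb / 2) * ((d i : ℂ) * (a i j : ℂ))) + ((r : FF ℓ m) + 1) * cst ℓ m (I * hb * (d j : ℂ))))) = (∏ r ∈ range (-(a j i)).toNat, (spec ℓ m 0 - gam ℓ m j k - cst ℓ m (cf ℓ a d hb i j r))) := by
      refine Finset.prod_congr rfl fun r _ => ?_
      rw [cst_cf_eq]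
    have hP'eq : (∏ r ∈ range (-(a j i)).toNat,
        (spec ℓ m 0 - gam ℓ m j k + cst ℓ m (I * hb * (d j : ℂ)) - (cst ℓ m ((I * hb / 2) * ((d i : ℂ) * (a i j : ℂ))) + ((r : FF ℓ m) + 1) * cst ℓ m (I * hb * (d j : ℂ))))) = (∏ r ∈ range (-(a j i)).toNat, (spec ℓ m 0 - gam ℓ m j k + cst ℓ m (I * hb * (d j : ℂ)) - cst ℓ m (cf ℓ a d hb i j r))) := by
      refine Finset.prod_congr rfl fun r _ => ?_
      rw [cst_cf_eq]
    rw [hPeq, hP'eq] at htel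
    have hDne : (∏ p : Fin (m i), ((spec ℓ m 0 - gam ℓ m i p) * (spec ℓ m 0 - gam ℓ m i p - cst ℓ m (I * hb * (d i : ℂ))))) ≠ 0 := by
      refine Finset.prod_ne_zero_iff.mpr fun p _ => ?_
      exact mul_ne_zero (spec_sub_gam_ne' ℓ m 0 i p) (spec_sub_gam_ne ℓ m 0 i p _)
    rw [hφNeq, hNeq, hφD, ← mul_div_assoc, ← mul_div_assoc, div_eq_div_iff hDne hDne]
    linear_combination (-(Rval ℓ m R i (spec ℓ m 0) * (∏ r ∈ range (-(a j i)).toNat, ∏ p ∈ univ.erase k, (spec ℓ m 0 - gam ℓ m j p - cst ℓ m (cf ℓ a d hb i j r))) * (∏ j' ∈ (univ.erase i).erase j, ∏ r ∈ range (-(a j' i)).toNat, ∏ p : Fin (m j'), (spec ℓ m 0 - gam ℓ m j' p - cst ℓ m (cf ℓ a d hb i j' r))) * (∏ p : Fin (m i), ((spec ℓ m 0 - gam ℓ m i p) * (spec ℓ m 0 - gam ℓ m i p - cst ℓ m (I * hb * (d i : ℂ))))))) * htel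

end Aux4
section Aux5
variable (ℓ : ℕ) (m : Fin ℓ → ℕ) (a : Fin ℓ → Fin ℓ → ℤ) (d : Fin ℓ → ℕ) (hb : ℂ)

lemma per_k (ha : ∀ i, a i i = 2) (ha' : ∀ i j, i ≠ j → a i j ≤ 0)
    (hsym : ∀ i j, (d i : ℤ) * a i j = (d j : ℤ) * a j i)
    (R : Fin ℓ → RatFunc ℂ) (i j : Fin ℓ) (k : Fin (m j)) :
    (spec ℓ m 0 - spec ℓ m 1) * (Ecoef ℓ m a d hb j k (spec ℓ m 1) * (Hmul ℓ m a d hb R i - (beta ℓ m d hb j k).symm (Hmul ℓ m a d hb R i)))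
      = cst ℓ m (-(I * hb / 2) * ((d i : ℂ) * (a i j : ℂ))) *
        ((Ecoef ℓ m a d hb j k (spec ℓ m 0) - Ecoef ℓ m a d hb j k (spec ℓ m 1)) * (Hmul ℓ m a d hb R i + (beta ℓ m d hb j k).symm (Hmul ℓ m a d hb R i))) := by
  have hkey := key ℓ m a d hb ha ha' hsym R i j k
  have hmc0 : cst ℓ m (-(I * hb / 2) * ((d i : ℂ) * (a i j : ℂ))) = -(cst ℓ m ((I * hb / 2) * ((d i : ℂ) * (a i j : ℂ)))) := by
    simp only [cst]
    rw [← map_neg]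
    congr 1
    ring
  have hxp : spec ℓ m 0 - gam ℓ m j k + cst ℓ m ((I * hb / 2) * ((d i : ℂ) * (a i j : ℂ))) ≠ 0 := spec_sub_gam_add_ne ℓ m 0 j k _
  have hU : spec ℓ m 0 - gam ℓ m j k ≠ 0 := spec_sub_gam_ne' ℓ m 0 j k
  have hV : spec ℓ m 1 - gam ℓ m j k ≠ 0 := spec_sub_gam_ne' ℓ m 1 j k
  have hB : (∏ p ∈ univ.erase k, (gam ℓ m j k - gam ℓ m j p)) ≠ 0 :=
    Finset.prod_ne_zero_iff.mpr fun p hp =>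
      gam_sub_gam_ne ℓ m j k p (Ne.symm (Finset.mem_erase.mp hp).1)
  have hφ : (beta ℓ m d hb j k).symm (Hmul ℓ m a d hb R i) = (spec ℓ m 0 - gam ℓ m j k - cst ℓ m ((I * hb / 2) * ((d i : ℂ) * (a i j : ℂ)))) * Hmul ℓ m a d hb R i / (spec ℓ m 0 - gam ℓ m j k + cst ℓ m ((I * hb / 2) * ((d i : ℂ) * (a i j : ℂ)))) := by
    rw [eq_div_iff hxp]
    linear_combination -hkey
  rw [hmc0, Ecoef, Ecoef, hφ]
  set CC := cst ℓ m ((I * hb / 2) * ((d i : ℂ) * (a i j : ℂ))) with hCC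
  set A := (∏ j' ∈ univ.filter (fun j' => j < j'), ∏ r ∈ range (-(a j' j)).toNat,
      ∏ p : Fin (m j'), (gam ℓ m j k - gam ℓ m j' p - cst ℓ m (cf ℓ a d hb j j' r))) with hA
  set B := (∏ p ∈ univ.erase k, (gam ℓ m j k - gam ℓ m j p)) with hBB
  set H := Hmul ℓ m a d hb R i with hH
  field_simp
  ring

end Aux5
theorem yangian_cartan_raising
    (ℓ : ℕ) (hl : 1 ≤ ℓ)
    (a : Fin ℓ → Fin ℓ → ℤ) (ha : ∀ i, a i i = 2) (ha' : ∀ i j, i ≠ j → a i j ≤ 0)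
    (d : Fin ℓ → ℕ) (hd : ∀ i, 0 < d i)
    (hsym : ∀ i j, (d i : ℤ) * a i j = (d j : ℤ) * a j i)
    (hb : ℂ) (m : Fin ℓ → ℕ) (hm : ∀ i, 0 < m i)
    (R : Fin ℓ → RatFunc ℂ)
    (hR : ∀ i, Polynomial.eval₂ (cstHom ℓ m) (spec ℓ m 0) (R i).denom ≠ 0)
    (i j : Fin ℓ) :
    (spec ℓ m 0 - spec ℓ m 1) •
        (Hop ℓ m a d hb R i (spec ℓ m 0) ∘ Eop ℓ m a d hb j (spec ℓ m 1)
          - Eop ℓ m a d hb j (spec ℓ m 1) ∘ Hop ℓ m a d hb R i (spec ℓ m 0))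
      = cst ℓ m (-(I * hb / 2) * ((d i : ℂ) * (a i j : ℂ))) •
        (Hop ℓ m a d hb R i (spec ℓ m 0) ∘
            (Eop ℓ m a d hb j (spec ℓ m 0) - Eop ℓ m a d hb j (spec ℓ m 1))
          + (Eop ℓ m a d hb j (spec ℓ m 0) - Eop ℓ m a d hb j (spec ℓ m 1)) ∘
            Hop ℓ m a d hb R i (spec ℓ m 0)) := by
  funext f
  simp only [Pi.smul_apply, Pi.sub_apply, Pi.add_apply, Function.comp_apply, smul_eq_mul,
    Hop_apply, Eop_apply, map_mul]
  simp only [Finset.mul_sum, ← Finset.sum_sub_distrib, ← Finset.sum_add_distrib]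
  refine Finset.sum_congr rfl fun k _ => ?_
  linear_combination (cst ℓ m ((d j : ℂ) ^ (-(1/2 : ℂ))) * (beta ℓ m d hb j k).symm f) *
    per_k ℓ m a d hb ha ha' hsym R i j k
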